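/- arXiv:1206.1903 — 5 statements merged into one kernel-verified Lean document; each statement's English description precedes it below -/
import Mathlib

section
/- In a single-winner stochastic resource auction among N players, where each player i's generation is a random variable X_i on [0,1] with true CDF F_i, the winner i' is the player with the highest reported expected generation ∫x dF̂_i(x), the marginal loser i'' is the player (other than i') with the highest reported expected generation, and the winner's payoff is U = X_{i'} − ∫x dF̂_{i''}(x) (all losers get payoff 0): then for every player, reporting the true distribution maximizes expected payoff regardless of the other players' reports (the SVCG mechanism is dominant-strategy incentive compatible). -/
open MeasureTheory

/-- Expected value of a distribution on ℝ. -/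
noncomputable def ev (μ : Measure ℝ) : ℝ := ∫ x, x ∂μ

/-- The SVCG mechanism is dominant-strategy incentive compatible:
for every player, reporting the true distribution maximizes expected payoff
regardless of the other players' reports. -/
theorem svcg_incentive_compatible
    (N : ℕ) (F : Fin N → Measure ℝ)
    (hFprob : ∀ i, IsProbabilityMeasure (F i))
    (hFsupp : ∀ i, (F i) (Set.Icc (0:ℝ) 1)ᶜ = 0)
    -- winner and marginal-loser selection rules, valid for every report profile
    (winner loser : (Fin N → Measure ℝ) → Fin N)
    (hwinner : ∀ P : Fin N → Measure ℝ, ∀ j, ev (P j) ≤ ev (P (winner P)))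
    (hloser : ∀ P : Fin N → Measure ℝ, loser P ≠ winner P ∧
      ∀ j, j ≠ winner P → ev (P j) ≤ ev (P (loser P)))
    -- expected payoff of player i (with true distribution F i) in report profile P:
    -- the winner pays the marginal loser's reported expectation up front and
    -- receives his realized generation (in expectation, ev (F i)); losers get 0
    (payoff : Fin N → (Fin N → Measure ℝ) → ℝ)
    (hpayoff : ∀ i P, payoff i P =
      if winner P = i then ev (F i) - ev (P (loser P)) else 0)
    -- an arbitrary report profile: R j is any report of player j (R i a deviation)
    (R : Fin N → Measure ℝ)
    (hRprob : ∀ i, IsProbabilityMeasure (R i))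
    (hRsupp : ∀ i, (R i) (Set.Icc (0:ℝ) 1)ᶜ = 0)
    (i : Fin N) :
    payoff i R ≤ payoff i (Function.update R i (F i)) := by
  set Q := Function.update R i (F i) with hQ
  have hQi : Q i = F i := Function.update_self i (F i) R
  have hQj : ∀ j, j ≠ i → Q j = R j := fun j hj => Function.update_of_ne hj (F i) R
  rw [hpayoff i R, hpayoff i Q]
  by_cases hwQ : winner Q = i
  · rw [if_pos hwQ]
    have hlQ : loser Q ≠ i := hwQ ▸ (hloser Q).1
    have hQl : Q (loser Q) = R (loser Q) := hQj _ hlQ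
    by_cases hwR : winner R = i
    · rw [if_pos hwR]
      have := (hloser R).2 (loser Q) (by rw [hwR]; exact hlQ)
      rw [hQl]; linarith
    · rw [if_neg hwR]
      have h1 : ev (Q (loser Q)) ≤ ev (Q (winner Q)) := hwinner Q _
      rw [hwQ, hQi, hQl] at h1
      rw [hQl]; linarith
  · rw [if_neg hwQ]
    by_cases hwR : winner R = i
    · rw [if_pos hwR]
      have h1 : ev (Q i) ≤ ev (Q (winner Q)) := hwinner Q i
      rw [hQi, hQj _ hwQ] at h1
      have h2 : ev (R (winner Q)) ≤ ev (R (loser R)) :=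
        (hloser R).2 (winner Q) (by rw [hwR]; exact hwQ)
      linarith
    · rw [if_neg hwR]
end

section
/- In the Stochastic Shortfall Penalty (SSP) auction—where the winner i' is the player with highest reported expected generation, he is paid 1 up front, and after realization pays penalty λ(1 − X_{i'}) with λ = 1/(1 − ∫x dF̂_{i''}(x)), i'' being the marginal loser—truthful reporting of one's distribution is a dominant strategy for every player. -/
open MeasureTheory

/-- In the SSP mechanism—winner paid 1 up front, paying penalty
λ(1 − X) with λ = 1/(1 − ev of marginal loser's report)—truthful reporting is a
dominant strategy for every player. -/
theorem ssp_incentive_compatible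
    (N : ℕ) (F : Fin N → Measure ℝ)
    (hFprob : ∀ i, IsProbabilityMeasure (F i))
    (hFsupp : ∀ i, (F i) (Set.Icc (0:ℝ) 1)ᶜ = 0)
    (hFlt : ∀ i, ev (F i) < 1)
    (winner loser : (Fin N → Measure ℝ) → Fin N)
    (hwinner : ∀ P : Fin N → Measure ℝ, ∀ j, ev (P j) ≤ ev (P (winner P)))
    (hloser : ∀ P : Fin N → Measure ℝ, loser P ≠ winner P ∧
      ∀ j, j ≠ winner P → ev (P j) ≤ ev (P (loser P)))
    -- expected payoff of player i (true distribution F i) in report profile P: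
    -- the winner receives 1 up front and expects to pay λ(1 − E[X_i]);
    -- losers get 0
    (payoff : Fin N → (Fin N → Measure ℝ) → ℝ)
    (hpayoff : ∀ i P, payoff i P =
      if winner P = i then
        1 - (1 / (1 - ev (P (loser P)))) * (1 - ev (F i))
      else 0)
    -- an arbitrary report profile: R j is any report of player j (R i a deviation)
    (R : Fin N → Measure ℝ)
    (hRprob : ∀ i, IsProbabilityMeasure (R i))
    (hRsupp : ∀ i, (R i) (Set.Icc (0:ℝ) 1)ᶜ = 0)
    (hRlt : ∀ i, ev (R i) < 1)
    (i : Fin N) :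
    payoff i R ≤ payoff i (Function.update R i (F i)) := by
  set T := Function.update R i (F i) with hT
  have hTi : T i = F i := Function.update_self i (F i) R
  have hTne : ∀ j, j ≠ i → T j = R j := fun j hj => Function.update_of_ne hj (F i) R
  rw [hpayoff i R, hpayoff i T]
  have hFi1 : ev (F i) < 1 := hFlt i
  by_cases hwT : winner T = i
  · rw [if_pos hwT]
    have hlT : loser T ≠ i := by rw [← hwT]; exact (hloser T).1
    have hTl : T (loser T) = R (loser T) := hTne _ hlT
    have hevlT : ev (T (loser T)) < 1 := by rw [hTl]; exact hRlt _
    have hle1 : ev (T (loser T)) ≤ ev (F i) := by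
      have := hwinner T (loser T); rwa [hwT, hTi] at this
    have h1 : 0 < 1 - ev (T (loser T)) := by linarith
    by_cases hwR : winner R = i
    · rw [if_pos hwR]
      have hlR : loser R ≠ i := by rw [← hwR]; exact (hloser R).1
      have hevlR : ev (R (loser R)) < 1 := hRlt _
      have hmono : ev (T (loser T)) ≤ ev (R (loser R)) := by
        rw [hTl]
        exact (hloser R).2 (loser T) (by rw [hwR]; exact hlT)
      have h2 : 0 < 1 - ev (R (loser R)) := by linarith
      have key : (1 / (1 - ev (T (loser T)))) * (1 - ev (F i))
          ≤ (1 / (1 - ev (R (loser R)))) * (1 - ev (F i)) := by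
        apply mul_le_mul_of_nonneg_right _ (by linarith)
        apply one_div_le_one_div_of_le h2
        linarith
      linarith
    · rw [if_neg hwR]
      have hdiv : (1 / (1 - ev (T (loser T)))) * (1 - ev (F i)) ≤ 1 := by
        rw [one_div_mul_eq_div, div_le_one h1]; linarith
      linarith
  · rw [if_neg hwT]
    by_cases hwR : winner R = i
    · rw [if_pos hwR]
      have hlR : loser R ≠ i := by rw [← hwR]; exact (hloser R).1
      have hevlR : ev (R (loser R)) < 1 := hRlt _
      have hFiLe : ev (F i) ≤ ev (R (loser R)) := by
        have h1 : ev (T i) ≤ ev (T (winner T)) := hwinner T i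
        rw [hTi, hTne _ hwT] at h1
        have h2 : ev (R (winner T)) ≤ ev (R (loser R)) :=
          (hloser R).2 _ (by rw [hwR]; exact hwT)
        linarith
      have hdiv : 1 ≤ (1 / (1 - ev (R (loser R)))) * (1 - ev (F i)) := by
        rw [one_div_mul_eq_div, le_div_iff₀ (by linarith : (0:ℝ) < 1 - ev (R (loser R)))]
        linarith
      linarith
    · rw [if_neg hwR]
end

section
/- For any measurable objective function h: [0,1] → ℝ with finite expectation under all admissible distributions, the generalized SVCG mechanism—winner i' ∈ argmax_i ∫h(x) dF̂_i(x), winner pays ∫h(x) dF̂_{i''}(x) in advance and receives h(X_{i'}) after realization—is dominant-strategy incentive compatible: truthful reporting maximizes each player's expected payoff against any profile of others' reports. -/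
open MeasureTheory

/-- The generalized SVCG mechanism with objective function h is
dominant-strategy incentive compatible. -/
theorem generalized_svcg_incentive_compatible
    (N : ℕ) (h : ℝ → ℝ) (hmeas : Measurable h)
    (F : Fin N → Measure ℝ)
    (hFprob : ∀ i, IsProbabilityMeasure (F i))
    (hFsupp : ∀ i, (F i) (Set.Icc (0:ℝ) 1)ᶜ = 0)
    (hFint : ∀ i, Integrable h (F i))
    (winner loser : (Fin N → Measure ℝ) → Fin N)
    (hwinner : ∀ P : Fin N → Measure ℝ, ∀ j,
      (∫ x, h x ∂(P j)) ≤ ∫ x, h x ∂(P (winner P)))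
    (hloser : ∀ P : Fin N → Measure ℝ, loser P ≠ winner P ∧
      ∀ j, j ≠ winner P → (∫ x, h x ∂(P j)) ≤ ∫ x, h x ∂(P (loser P)))
    -- expected payoff of player i (true distribution F i) in report profile P:
    -- the winner pays ∫ h d(report of marginal loser) in advance and receives
    -- h(X_i) after realization, so expects ∫ h dF_i; losers get 0
    (payoff : Fin N → (Fin N → Measure ℝ) → ℝ)
    (hpayoff : ∀ i P, payoff i P =
      if winner P = i then
        (∫ x, h x ∂(F i)) - ∫ x, h x ∂(P (loser P))
      else 0)
    (R : Fin N → Measure ℝ)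
    (hRprob : ∀ i, IsProbabilityMeasure (R i))
    (hRsupp : ∀ i, (R i) (Set.Icc (0:ℝ) 1)ᶜ = 0)
    (hRint : ∀ i, Integrable h (R i))
    (i : Fin N) :
    payoff i R ≤ payoff i (Function.update R i (F i)) := by
  set P := Function.update R i (F i) with hP
  have hPi : P i = F i := Function.update_self i (F i) R
  have hPj : ∀ j, j ≠ i → P j = R j := fun j hj => Function.update_of_ne hj (F i) R
  rw [hpayoff i R, hpayoff i P]
  by_cases hwR : winner R = i
  · -- i wins under truthful profile R
    have hlRne : loser R ≠ i := hwR ▸ (hloser R).1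
    by_cases hwP : winner P = i
    · simp only [hwR, hwP, if_true]
      have hlPne : loser P ≠ i := hwP ▸ (hloser P).1
      have h1 : (∫ x, h x ∂(P (loser P))) = ∫ x, h x ∂(R (loser P)) := by
        rw [hPj _ hlPne]
      have h2 : (∫ x, h x ∂(R (loser P))) ≤ ∫ x, h x ∂(R (loser R)) :=
        (hloser R).2 (loser P) (hwR ▸ hlPne)
      linarith
    · simp only [hwR, hwP, if_true, if_false]
      -- show payoff under R is ≤ 0
      have h1 : (∫ x, h x ∂(F i)) = ∫ x, h x ∂(P i) := by rw [hPi]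
      have h2 : (∫ x, h x ∂(P i)) ≤ ∫ x, h x ∂(P (winner P)) := hwinner P i
      have h3 : P (winner P) = R (winner P) := hPj _ hwP
      have h4 : (∫ x, h x ∂(R (winner P))) ≤ ∫ x, h x ∂(R (loser R)) :=
        (hloser R).2 (winner P) (hwR ▸ hwP)
      rw [h3] at h2
      linarith
  · by_cases hwP : winner P = i
    · simp only [hwR, hwP, if_true, if_false]
      have hlPne : loser P ≠ i := hwP ▸ (hloser P).1
      have h2 : (∫ x, h x ∂(P (loser P))) ≤ ∫ x, h x ∂(P (winner P)) :=
        hwinner P (loser P)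
      rw [hwP, hPi] at h2
      linarith
    · simp [hwR, hwP]
end

section
/- In the M-winner SVCG mechanism—players ranked by ∫h dF̂_i, the top M are winners, each winner pays ∫h(x) dF̂_{i_{(M+1)}}(x) in advance and receives h(X_i) after realization—truthful reporting is a dominant strategy for every player, for any h ∈ H. -/
open MeasureTheory

/-- The M-winner SVCG mechanism (top M bidders by ∫ h dF̂ win; each
winner pays the (M+1)-th highest reported value in advance and receives h(X_i)
after realization) is dominant-strategy incentive compatible. -/
theorem m_svcg_incentive_compatible
    (N M : ℕ) (hMN : M < N)
    (h : ℝ → ℝ) (hmeas : Measurable h)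
    (F : Fin N → Measure ℝ)
    (hFprob : ∀ i, IsProbabilityMeasure (F i))
    (hFsupp : ∀ i, (F i) (Set.Icc (0:ℝ) 1)ᶜ = 0)
    (hFint : ∀ i, Integrable h (F i))
    -- the set of M winners and the marginal loser, for every report profile
    (winners : (Fin N → Measure ℝ) → Finset (Fin N))
    (mloser : (Fin N → Measure ℝ) → Fin N)
    (hcard : ∀ P, (winners P).card = M)
    (hwinners : ∀ P : Fin N → Measure ℝ, ∀ j ∈ winners P, ∀ k ∉ winners P,
      (∫ x, h x ∂(P k)) ≤ ∫ x, h x ∂(P j))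
    (hmloser : ∀ P : Fin N → Measure ℝ, mloser P ∉ winners P ∧
      ∀ k ∉ winners P, (∫ x, h x ∂(P k)) ≤ ∫ x, h x ∂(P (mloser P)))
    -- expected payoff of player i (true distribution F i) in report profile P
    (payoff : Fin N → (Fin N → Measure ℝ) → ℝ)
    (hpayoff : ∀ i P, payoff i P =
      if i ∈ winners P then
        (∫ x, h x ∂(F i)) - ∫ x, h x ∂(P (mloser P))
      else 0)
    (R : Fin N → Measure ℝ)
    (hRprob : ∀ i, IsProbabilityMeasure (R i))
    (hRsupp : ∀ i, (R i) (Set.Icc (0:ℝ) 1)ᶜ = 0)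
    (hRint : ∀ i, Integrable h (R i))
    (i : Fin N) :
    payoff i R ≤ payoff i (Function.update R i (F i)) := by
  set Q := Function.update R i (F i) with hQdef
  have hQi : Q i = F i := Function.update_self i (F i) R
  have hQk : ∀ k, k ≠ i → Q k = R k := fun k hk => Function.update_of_ne hk _ _
  have exmem : ∀ (A B : Finset (Fin N)), A.card = B.card → ∀ x ∈ A, x ∉ B →
      ∃ j ∈ B, j ∉ A := by
    intro A B hc x hxA hxB
    by_contra hcon
    push_neg at hcon
    have hBA : B ⊂ A := (Finset.ssubset_iff_of_subset hcon).mpr ⟨x, hxA, hxB⟩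
    have := Finset.card_lt_card hBA
    omega
  have hmR := hmloser R
  have hmQ := hmloser Q
  rw [hpayoff i R, hpayoff i Q]
  by_cases hiR : i ∈ winners R
  · have hiRne : mloser R ≠ i := fun e => hmR.1 (e ▸ hiR)
    by_cases hiQ : i ∈ winners Q
    · have hiQne : mloser Q ≠ i := fun e => hmQ.1 (e ▸ hiQ)
      rw [if_pos hiR, if_pos hiQ]
      apply sub_le_sub_left
      -- show ∫ ∂ Q (mloser Q) ≤ ∫ ∂ R (mloser R)
      rw [hQk _ hiQne]
      by_cases hmem : mloser Q ∈ winners R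
      · obtain ⟨j, hjQ, hjR⟩ := exmem (winners R) (winners Q)
          ((hcard R).trans (hcard Q).symm) (mloser Q) hmem hmQ.1
        have hjne : j ≠ i := fun e => hjR (e ▸ hiR)
        calc ∫ x, h x ∂(R (mloser Q)) = ∫ x, h x ∂(Q (mloser Q)) := by
              rw [hQk _ hiQne]
          _ ≤ ∫ x, h x ∂(Q j) := hwinners Q j hjQ (mloser Q) hmQ.1
          _ = ∫ x, h x ∂(R j) := by rw [hQk _ hjne]
          _ ≤ ∫ x, h x ∂(R (mloser R)) := hmR.2 j hjR
      · exact hmR.2 (mloser Q) hmem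
    · rw [if_pos hiR, if_neg hiQ]
      apply sub_nonpos_of_le
      obtain ⟨j, hjQ, hjR⟩ := exmem (winners R) (winners Q)
        ((hcard R).trans (hcard Q).symm) i hiR hiQ
      have hjne : j ≠ i := fun e => hjR (e ▸ hiR)
      calc ∫ x, h x ∂(F i) = ∫ x, h x ∂(Q i) := by rw [hQi]
        _ ≤ ∫ x, h x ∂(Q j) := hwinners Q j hjQ i hiQ
        _ = ∫ x, h x ∂(R j) := by rw [hQk _ hjne]
        _ ≤ ∫ x, h x ∂(R (mloser R)) := hmR.2 j hjR
  · rw [if_neg hiR]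
    by_cases hiQ : i ∈ winners Q
    · rw [if_pos hiQ]
      apply sub_nonneg_of_le
      calc ∫ x, h x ∂(Q (mloser Q)) ≤ ∫ x, h x ∂(Q i) :=
            hwinners Q i hiQ (mloser Q) hmQ.1
        _ = ∫ x, h x ∂(F i) := by rw [hQi]
    · rw [if_neg hiQ]
end

section
/- Truthful reporting is NOT in general a dominant strategy for a TSO in the TSVCG mechanism: a TSO's best response depends on the generators' reported distributions, so there exist generator reports against which a TSO strictly benefits from misreporting his cost function. -/
open MeasureTheory

/-- Reported expected net surplus of the pair (generator i, TSO j). -/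
noncomputable def surplus {N M : ℕ} (Fh : Fin N → Measure ℝ)
    (ch : Fin M → ℝ → ℝ) (i : Fin N) (j : Fin M) : ℝ :=
  ∫ x, (x - ch j x) ∂(Fh i)

noncomputable def myF : Fin 1 → Measure ℝ := fun _ => Measure.dirac 0
noncomputable def myFh : Fin 1 → Measure ℝ := fun _ => Measure.dirac 1

noncomputable def myC : Fin 2 → ℝ → ℝ := fun j x => if j = 0 then x else 1/2

noncomputable def myW (Fr : Fin 1 → Measure ℝ) (cr : Fin 2 → ℝ → ℝ) : Fin 1 × Fin 2 :=
  if surplus Fr cr 0 0 ≤ surplus Fr cr 0 1 then (0, 1) else (0, 0)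

noncomputable def mySTso (Fr : Fin 1 → Measure ℝ) (cr : Fin 2 → ℝ → ℝ) (j' : Fin 2) : ℝ :=
  surplus Fr cr 0 (if j' = 0 then 1 else 0)

/-- Truthful reporting is NOT in general a dominant strategy for
a TSO in the TSVCG mechanism: there is an instance (generators' true and
reported distributions, TSOs' true costs, and a valid winner/surplus
structure) in which some TSO strictly increases his expected payoff by
misreporting his cost function against the given generator reports. -/
theorem tsvcg_tso_truthful_not_dominant :
    ∃ (N M : ℕ) (F Fh : Fin N → Measure ℝ) (c : Fin M → ℝ → ℝ)
      (w : (Fin N → Measure ℝ) → (Fin M → ℝ → ℝ) → Fin N × Fin M)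
      (sTso : (Fin N → Measure ℝ) → (Fin M → ℝ → ℝ) → Fin M → ℝ)
      (tsoPayoff : Fin M → (Fin N → Measure ℝ) → (Fin M → ℝ → ℝ) → ℝ)
      (j : Fin M) (cdev : ℝ → ℝ),
      -- true and reported distributions are admissible
      (∀ i, IsProbabilityMeasure (F i)) ∧
      (∀ i, (F i) (Set.Icc (0:ℝ) 1)ᶜ = 0) ∧
      (∀ i, IsProbabilityMeasure (Fh i)) ∧
      (∀ i, (Fh i) (Set.Icc (0:ℝ) 1)ᶜ = 0) ∧
      -- the winning pair maximizes reported expected net surplus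
      (∀ Fr cr, ∀ (i : Fin N) (j' : Fin M),
        surplus Fr cr i j' ≤ surplus Fr cr (w Fr cr).1 (w Fr cr).2) ∧
      -- s^{−j} is the maximal reported surplus with TSO j absent
      (∀ Fr cr j',
        (∃ (i : Fin N) (j'' : Fin M), j'' ≠ j' ∧
          sTso Fr cr j' = surplus Fr cr i j'') ∧
        ∀ (i : Fin N) (j'' : Fin M), j'' ≠ j' →
          surplus Fr cr i j'' ≤ sTso Fr cr j') ∧
      -- the TSO's expected payoff: paid ∫ x dF̂_{i'} − s^{−j} up front and
      -- incurring the expected true cost under the winner's TRUE distribution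
      (∀ j' Fr cr, tsoPayoff j' Fr cr =
        if (w Fr cr).2 = j' then
          (∫ x, x ∂(Fr (w Fr cr).1)) - sTso Fr cr j' -
            ∫ x, c j' x ∂(F (w Fr cr).1)
        else 0) ∧
      -- misreporting cdev is strictly profitable for TSO j against reports Fh
      tsoPayoff j Fh c < tsoPayoff j Fh (Function.update c j cdev) := by
  refine ⟨1, 2, myF, myFh, myC,
    myW, mySTso,
    fun j' Fr cr =>
      if (myW Fr cr).2 = j' then
        (∫ x, x ∂(Fr (myW Fr cr).1)) - mySTso Fr cr j' -
          ∫ x, myC j' x ∂(Measure.dirac 0)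
      else 0,
    0, fun _ => 0, fun _ => by unfold myF; infer_instance, ?_, fun _ => by unfold myFh; infer_instance, ?_,
    ?_, ?_, fun _ _ _ => rfl, ?_⟩
  · intro i
    unfold myF
    rw [Measure.dirac_apply' _ measurableSet_Icc.compl]
    simp
  · intro i
    unfold myFh
    rw [Measure.dirac_apply' _ measurableSet_Icc.compl]
    simp
  · intro Fr cr i j'
    have hi : i = 0 := Subsingleton.elim _ _
    subst hi
    unfold myW
    split_ifs with h
    · fin_cases j' <;> simp [h]
    · fin_cases j' <;> simp [le_of_not_ge h]
  · intro Fr cr j'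
    constructor
    · exact ⟨(0 : Fin 1), if j' = 0 then (1 : Fin 2) else 0, by fin_cases j' <;> decide, rfl⟩
    · intro i j'' hne
      have hi : i = 0 := Subsingleton.elim _ _
      subst hi
      have : j'' = if j' = 0 then 1 else 0 := by fin_cases j' <;> fin_cases j'' <;> simp_all
      rw [this]
      exact le_refl _
  · -- final inequality
    have h00 : surplus myFh myC 0 0 = 0 := by
      unfold surplus myFh
      rw [integral_dirac]
      simp [myC]
    have h01 : surplus myFh myC 0 1 = 1/2 := by
      unfold surplus myFh
      rw [integral_dirac]
      norm_num [myC]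
    set cr := Function.update myC 0 (fun _ => (0:ℝ)) with hcr
    have hcr0 : cr 0 = fun _ => (0:ℝ) := Function.update_self _ _ _
    have hcr1 : cr 1 = myC 1 := Function.update_of_ne (by decide) _ _
    have d00 : surplus myFh cr 0 0 = 1 := by
      unfold surplus myFh
      rw [integral_dirac]
      simp [hcr0]
    have d01 : surplus myFh cr 0 1 = 1/2 := by
      unfold surplus myFh
      rw [integral_dirac]
      norm_num [hcr1, myC]
    have hw1 : myW myFh myC = (0, 1) := by
      unfold myW
      rw [h00, h01]
      norm_num
    have hw2 : myW myFh cr = (0, 0) := by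
      unfold myW
      rw [d00, d01]
      norm_num
    simp only [hw1, hw2]
    have hs : mySTso myFh cr 0 = 1/2 := by
      unfold mySTso
      simpa using d01
    have hint : (∫ x, x ∂(myFh 0)) = 1 := by unfold myFh; rw [integral_dirac]
    have hint0 : (∫ x, myC 0 x ∂(Measure.dirac (0:ℝ))) = 0 := by
      rw [integral_dirac]; simp [myC]
    simp only [hs, hint, hint0]
    norm_num
end
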